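/- Let E ⊂ ℝ^N be compact with projection π(E) ⊂ ℝ^{N-1}. Suppose π(E) is a Markov set with constants A, η (i.e., ‖D^γ G‖_{π(E)} ≤ A(deg G)^{η|γ|}‖G‖_{π(E)} for all polynomials G in N−1 variables) and suppose there exist B, λ > 0 such that for every polynomial P = ∑_{i=0}^{d-1} G_i(y) x_k^i one has ‖G_i‖_{π(E)} ≤ B (deg P)^λ ‖P‖_E for all i. Then E is a 𝒫(y)⊗𝒫_{d-1}(x_k)-Markov set; concretely, there is K > 0 depending only on E and d with ‖∂P/∂x_j‖_E ≤ Kd(AB(deg P)^{η+λ} + B(deg P)^λ)‖P‖_E for all j. -/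

import Mathlib

open MvPolynomial

/-- Partial derivative in direction `i` of a function on `ℝ^N`. -/
noncomputable def pd {N : ℕ} (i : Fin N) (f : (Fin N → ℝ) → ℝ) : (Fin N → ℝ) → ℝ :=
  fun x => fderiv ℝ f x (Pi.single i 1)

/-- Iterated partial derivative `D^γ` for a multi-index `γ`. -/
noncomputable def mderiv {N : ℕ} (γ : Fin N → ℕ) (f : (Fin N → ℝ) → ℝ) : (Fin N → ℝ) → ℝ :=
  (List.finRange N).foldr (fun i g => (pd i)^[γ i] g) f

/-- The polynomial function `P(z) = ∑_{i=0}^{d-1} G_i(y) x_k^i`. -/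
noncomputable def Pfun {n d : ℕ} (k : Fin (n + 1)) (G : Fin d → MvPolynomial (Fin n) ℝ) :
    (Fin (n + 1) → ℝ) → ℝ :=
  fun z => ∑ i : Fin d, MvPolynomial.eval (fun j => z (k.succAbove j)) (G i) * z k ^ (i : ℕ)

/-- `deg P = max_i (deg G_i + i)`. -/
def degP {n d : ℕ} (G : Fin d → MvPolynomial (Fin n) ℝ) : ℕ :=
  Finset.univ.sup fun i : Fin d => (G i).totalDegree + (i : ℕ)

/-- The projection of `E` forgetting the `k`-th coordinate. -/
def projE {n : ℕ} (k : Fin (n + 1)) (E : Set (Fin (n + 1) → ℝ)) : Set (Fin n → ℝ) :=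
  (fun z (j : Fin n) => z (k.succAbove j)) '' E

lemma foldr_single_aux {N : ℕ} (j : Fin N) (f : (Fin N → ℝ) → ℝ) :
    ∀ l : List (Fin N), l.Nodup →
      l.foldr (fun i g => (pd i)^[(Pi.single j 1 : Fin N → ℕ) i] g) f
        = if j ∈ l then pd j f else f := by
  intro l
  induction l with
  | nil => simp
  | cons a t ih =>
    intro hnd
    rw [List.nodup_cons] at hnd
    rcases eq_or_ne a j with rfl | hne
    · simp [List.foldr_cons, ih hnd.2, if_neg hnd.1]
    · simp [List.foldr_cons, ih hnd.2, Pi.single_eq_of_ne hne, List.mem_cons, hne.symm]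

lemma mderiv_single {N : ℕ} (j : Fin N) (f : (Fin N → ℝ) → ℝ) :
    mderiv (Pi.single j 1) f = pd j f := by
  rw [mderiv, foldr_single_aux j f _ (List.nodup_finRange N), if_pos (List.mem_finRange j)]

lemma diff_eval {n : ℕ} (p : MvPolynomial (Fin n) ℝ) :
    Differentiable ℝ (fun w : Fin n → ℝ => eval w p) := by
  apply p.induction_on (fun c => by simpa using differentiable_const c)
    (fun p q hp hq => by simpa using hp.fun_add hq)
    (fun p i hp => by
      simpa using hp.fun_mul ((ContinuousLinearMap.proj i : (Fin n → ℝ) →L[ℝ] ℝ).differentiable))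

noncomputable def Lk {n : ℕ} (k : Fin (n + 1)) : ((Fin (n+1) → ℝ)) →L[ℝ] (Fin n → ℝ) :=
  ContinuousLinearMap.pi fun j => ContinuousLinearMap.proj (k.succAbove j)

lemma hasFDerivAt_Pfun {n d : ℕ} (k : Fin (n + 1)) (G : Fin d → MvPolynomial (Fin n) ℝ)
    (z : Fin (n+1) → ℝ) :
    HasFDerivAt (Pfun k G)
      (∑ i : Fin d,
        ((fun w => eval w (G i)) (Lk k z) • (((i:ℕ) * z k ^ ((i:ℕ) - 1)) •
            (ContinuousLinearMap.proj k : ((Fin (n+1) → ℝ)) →L[ℝ] ℝ))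
          + (z k ^ (i:ℕ)) • ((fderiv ℝ (fun w => eval w (G i)) (Lk k z)).comp (Lk k)))) z := by
  have : Pfun k G = fun z => ∑ i : Fin d, eval (Lk k z) (G i) * z k ^ (i:ℕ) := rfl
  rw [this]
  apply HasFDerivAt.fun_sum
  intro i _
  have hf : HasFDerivAt (fun z : Fin (n+1) → ℝ => eval (Lk k z) (G i))
      ((fderiv ℝ (fun w => eval w (G i)) (Lk k z)).comp (Lk k)) z :=
    ((diff_eval (G i) (Lk k z)).hasFDerivAt).comp z (Lk k).hasFDerivAt
  have hg : HasFDerivAt (fun z : Fin (n+1) → ℝ => z k ^ (i:ℕ))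
      (((i:ℕ) * z k ^ ((i:ℕ) - 1)) • (ContinuousLinearMap.proj k : ((Fin (n+1) → ℝ)) →L[ℝ] ℝ)) z := by
    have h1 : HasFDerivAt (fun z : Fin (n+1) → ℝ => z k)
        (ContinuousLinearMap.proj k : ((Fin (n+1) → ℝ)) →L[ℝ] ℝ) z :=
      (ContinuousLinearMap.proj k : ((Fin (n+1) → ℝ)) →L[ℝ] ℝ).hasFDerivAt
    exact (hasDerivAt_pow (i:ℕ) (z k)).comp_hasFDerivAt z h1
  exact hf.mul hg

lemma Lk_single_k {n : ℕ} (k : Fin (n + 1)) : Lk k (Pi.single k 1) = 0 := by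
  funext j
  simp [Lk, Pi.single_eq_of_ne (Fin.succAbove_ne k j)]

lemma Lk_single_succAbove {n : ℕ} (k : Fin (n + 1)) (j' : Fin n) :
    Lk k (Pi.single (k.succAbove j') 1) = Pi.single j' 1 := by
  funext j
  rcases eq_or_ne j j' with rfl | h
  · simp [Lk]
  · simp [Lk, Pi.single_eq_of_ne h,
      Pi.single_eq_of_ne (fun hc => h (Fin.succAbove_right_injective hc))]

lemma pd_Pfun_k {n d : ℕ} (k : Fin (n + 1)) (G : Fin d → MvPolynomial (Fin n) ℝ)
    (z : Fin (n+1) → ℝ) :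
    pd k (Pfun k G) z
      = ∑ i : Fin d, eval (Lk k z) (G i) * ((i:ℕ) * z k ^ ((i:ℕ) - 1)) := by
  rw [pd, (hasFDerivAt_Pfun k G z).fderiv]
  simp [ContinuousLinearMap.sum_apply, Lk_single_k]

lemma pd_Pfun_succAbove {n d : ℕ} (k : Fin (n + 1)) (G : Fin d → MvPolynomial (Fin n) ℝ)
    (j' : Fin n) (z : Fin (n+1) → ℝ) :
    pd (k.succAbove j') (Pfun k G) z
      = ∑ i : Fin d, z k ^ (i:ℕ) * pd j' (fun w => eval w (G i)) (Lk k z) := by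
  rw [pd, (hasFDerivAt_Pfun k G z).fderiv]
  simp [ContinuousLinearMap.sum_apply, Lk_single_succAbove,
    Pi.single_eq_of_ne (Fin.succAbove_ne k j').symm, pd]

/-- If `π(E)` is a Markov set (constants `A, η`) and the coefficients of every
`P = ∑_{i<d} G_i(y)x_k^i` satisfy `‖G_i‖_{π(E)} ≤ B (deg P)^λ ‖P‖_E`, then `E` is a
`𝒫(y)⊗𝒫_{d-1}(x_k)`-Markov set; concretely there is `K > 0` with
`‖∂P/∂x_j‖_E ≤ K d (A B (deg P)^{η+λ} + B (deg P)^λ) ‖P‖_E` for all `j`. -/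
theorem Markov_of_coefficient_bounds (n d : ℕ) (hd : 1 ≤ d) (k : Fin (n + 1))
    (E : Set (Fin (n + 1) → ℝ)) (hE : IsCompact E) (hEne : E.Nonempty)
    (A η : ℝ) (hA : 0 < A) (hη : 0 < η)
    (hMarkov : ∀ G : MvPolynomial (Fin n) ℝ, ∀ γ : Fin n → ℕ, ∀ C : ℝ,
      (∀ y ∈ projE k E, |MvPolynomial.eval y G| ≤ C) →
      ∀ y ∈ projE k E, |mderiv γ (fun w => MvPolynomial.eval w G) y|
        ≤ A * ((G.totalDegree : ℝ)) ^ (η * ((∑ i, γ i : ℕ) : ℝ)) * C)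
    (B lam : ℝ) (hB : 0 < B) (hlam : 0 < lam)
    (hcoef : ∀ G : Fin d → MvPolynomial (Fin n) ℝ, ∀ C : ℝ,
      (∀ z ∈ E, |Pfun k G z| ≤ C) →
      ∀ i : Fin d, ∀ y ∈ projE k E,
        |MvPolynomial.eval y (G i)| ≤ B * ((degP G : ℝ)) ^ lam * C) :
    ∃ K : ℝ, 0 < K ∧
      ∀ G : Fin d → MvPolynomial (Fin n) ℝ, ∀ j : Fin (n + 1), ∀ C : ℝ,
        (∀ z ∈ E, |Pfun k G z| ≤ C) →
        ∀ z ∈ E, |pd j (Pfun k G) z|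
          ≤ K * d * (A * B * ((degP G : ℝ)) ^ (η + lam) + B * ((degP G : ℝ)) ^ lam) * C := by
  -- bound on the k-th coordinate over E
  obtain ⟨z1, hz1E, hz1⟩ := hE.exists_isMaxOn hEne ((continuous_apply k).abs.continuousOn)
  rw [isMaxOn_iff] at hz1
  set M : ℝ := max |z1 k| 1 with hMdef
  have hM1 : (1:ℝ) ≤ M := le_max_right _ _
  have hM0 : (0:ℝ) ≤ M := le_trans zero_le_one hM1
  have hMz : ∀ z ∈ E, |z k| ≤ M := fun z hz => le_trans (hz1 z hz) (le_max_left _ _)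
  refine ⟨(d:ℝ) * M ^ d, by positivity, ?_⟩
  intro G j C hPC z hz
  have hC0 : 0 ≤ C := le_trans (abs_nonneg _) (hPC z hz)
  set D : ℝ := (degP G : ℝ) with hDdef
  have hD0 : (0:ℝ) ≤ D := Nat.cast_nonneg _
  have hy : Lk k z ∈ projE k E := ⟨z, hz, rfl⟩
  have hcoefB := hcoef G C hPC
  have hzkM : |z k| ≤ M := hMz z hz
  have hpow : ∀ m : ℕ, m ≤ d → |z k| ^ m ≤ M ^ d := fun m hm =>
    le_trans (pow_le_pow_left₀ (abs_nonneg _) hzkM m) (pow_le_pow_right₀ hM1 hm)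
  have hT1 : 0 ≤ A * B * D ^ (η + lam) := by positivity
  have hT2 : 0 ≤ B * D ^ lam := by positivity
  rcases eq_or_ne j k with rfl | hjk
  · -- derivative in the x_k direction
    rw [pd_Pfun_k]
    have hterm : ∀ i : Fin d,
        |eval (Lk j z) (G i) * ((i:ℕ) * z j ^ ((i:ℕ) - 1))|
          ≤ (B * D ^ lam * C) * ((d:ℝ) * M ^ d) := by
      intro i
      rw [abs_mul, abs_mul, abs_pow]
      have h1 : |eval (Lk j z) (G i)| ≤ B * D ^ lam * C := hcoefB i _ hy
      have h2 : |((i:ℕ):ℝ)| ≤ (d:ℝ) := by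
        rw [abs_of_nonneg (Nat.cast_nonneg _)]
        exact_mod_cast (i.isLt).le
      have h3 : |z j| ^ ((i:ℕ) - 1) ≤ M ^ d :=
        hpow _ (le_trans (Nat.sub_le _ _) i.isLt.le)
      have h4 : 0 ≤ |z j| ^ ((i:ℕ) - 1) := pow_nonneg (abs_nonneg _) _
      have h5 : |((i:ℕ):ℝ)| * |z j| ^ ((i:ℕ) - 1) ≤ (d:ℝ) * M ^ d :=
        mul_le_mul h2 h3 h4 (Nat.cast_nonneg _)
      exact mul_le_mul h1 h5 (mul_nonneg (abs_nonneg _) h4) (by positivity)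
    calc |∑ i : Fin d, eval (Lk j z) (G i) * ((i:ℕ) * z j ^ ((i:ℕ) - 1))|
        ≤ ∑ i : Fin d, |eval (Lk j z) (G i) * ((i:ℕ) * z j ^ ((i:ℕ) - 1))| :=
          Finset.abs_sum_le_sum_abs _ _
      _ ≤ ∑ _i : Fin d, (B * D ^ lam * C) * ((d:ℝ) * M ^ d) :=
          Finset.sum_le_sum fun i _ => hterm i
      _ = (d:ℝ) * ((B * D ^ lam * C) * ((d:ℝ) * M ^ d)) := by
          rw [Finset.sum_const, Finset.card_univ, Fintype.card_fin, nsmul_eq_mul]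
      _ ≤ (d:ℝ) * M ^ d * (d:ℝ) * (A * B * D ^ (η + lam) + B * D ^ lam) * C := by
          nlinarith [mul_nonneg (mul_nonneg hT1 hC0)
            (mul_nonneg (mul_nonneg (Nat.cast_nonneg (α := ℝ) d) (pow_nonneg hM0 d))
              (Nat.cast_nonneg (α := ℝ) d))]
  · -- derivative in a y direction
    obtain ⟨j', rfl⟩ := Fin.exists_succAbove_eq hjk
    rw [pd_Pfun_succAbove]
    have hterm : ∀ i : Fin d,
        |z k ^ (i:ℕ) * pd j' (fun w => eval w (G i)) (Lk k z)|
          ≤ M ^ d * (A * B * D ^ (η + lam) * C) := by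
      intro i
      have hmd := hMarkov (G i) (Pi.single j' 1) (B * D ^ lam * C)
        (fun y hy' => hcoefB i y hy') (Lk k z) hy
      rw [mderiv_single] at hmd
      have hsum : (∑ i2, (Pi.single j' 1 : Fin n → ℕ) i2) = 1 := by
        simp [Finset.sum_pi_single']
      rw [hsum] at hmd
      norm_num at hmd
      -- hmd : |pd j' (eval · (G i)) (Lk k z)| ≤ A * (deg G i)^η * (B * D^lam * C)
      have hdeg : ((G i).totalDegree : ℝ) ≤ D := by
        rw [hDdef]
        exact_mod_cast le_trans (Nat.le_add_right _ _)
          (Finset.le_sup (f := fun i2 : Fin d => (G i2).totalDegree + (i2:ℕ))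
            (Finset.mem_univ i))
      have hrpow : ((G i).totalDegree : ℝ) ^ η ≤ D ^ η :=
        Real.rpow_le_rpow (Nat.cast_nonneg _) hdeg hη.le
      have hDadd : D ^ (η + lam) = D ^ η * D ^ lam :=
        Real.rpow_add' hD0 (ne_of_gt (add_pos hη hlam))
      have h2 : |pd j' (fun w => eval w (G i)) (Lk k z)|
          ≤ A * B * D ^ (η + lam) * C := by
        rw [hDadd]
        calc |pd j' (fun w => eval w (G i)) (Lk k z)|
            ≤ A * ((G i).totalDegree : ℝ) ^ η * (B * D ^ lam * C) := hmd
          _ ≤ A * D ^ η * (B * D ^ lam * C) := by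
              have := mul_le_mul_of_nonneg_left hrpow hA.le
              exact mul_le_mul_of_nonneg_right this (by positivity)
          _ = A * B * (D ^ η * D ^ lam) * C := by ring
      rw [abs_mul, abs_pow]
      exact mul_le_mul (hpow _ i.isLt.le) h2 (abs_nonneg _) (by positivity)
    calc |∑ i : Fin d, z k ^ (i:ℕ) * pd j' (fun w => eval w (G i)) (Lk k z)|
        ≤ ∑ i : Fin d, |z k ^ (i:ℕ) * pd j' (fun w => eval w (G i)) (Lk k z)| :=
          Finset.abs_sum_le_sum_abs _ _
      _ ≤ ∑ _i : Fin d, M ^ d * (A * B * D ^ (η + lam) * C) :=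
          Finset.sum_le_sum fun i _ => hterm i
      _ = (d:ℝ) * (M ^ d * (A * B * D ^ (η + lam) * C)) := by
          rw [Finset.sum_const, Finset.card_univ, Fintype.card_fin, nsmul_eq_mul]
      _ ≤ (d:ℝ) * M ^ d * (d:ℝ) * (A * B * D ^ (η + lam) + B * D ^ lam) * C := by
          have hd1 : (1:ℝ) ≤ (d:ℝ) := by exact_mod_cast hd
          nlinarith [mul_nonneg (mul_nonneg hT2 hC0)
              (mul_nonneg (Nat.cast_nonneg (α := ℝ) d) (pow_nonneg hM0 d)),
            mul_nonneg (mul_nonneg hT1 hC0) (pow_nonneg hM0 d),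
            mul_nonneg (mul_nonneg (mul_nonneg hT1 hC0) (pow_nonneg hM0 d))
              (sub_nonneg.mpr hd1)]
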